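/- Every MILP-representable set is a DMIC set. That is, if S ⊆ ℝ^n is MILP-representable, then S is a disjunctive mixed-integer Chvátal set (with q = 0 integer coordinates, i.e., S is a finite union of sets each described by finitely many affine Chvátal inequalities in x ∈ ℝ^n). -/

import Mathlib

/-- Binary tree representation of an affine Chvátal function on `ℝ^n`. -/
inductive ChvatalTree (n : ℕ) : Type
  | leaf (a : Fin n → ℚ) (c : ℚ) : ChvatalTree n
  | ceil (t : ChvatalTree n) : ChvatalTree n
  | scale (a : ℚ) (t : ChvatalTree n) : ChvatalTree n
  | comb (a b : ℚ) (t₁ t₂ : ChvatalTree n) : ChvatalTree n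

namespace ChvatalTree

/-- The function computed by the tree. -/
noncomputable def eval {n : ℕ} : ChvatalTree n → (Fin n → ℝ) → ℝ
  | leaf a c, x => (∑ j, (a j : ℝ) * x j) + (c : ℝ)
  | ceil t, x => (⌈t.eval x⌉ : ℝ)
  | scale a t, x => (a : ℝ) * t.eval x
  | comb a b t₁ t₂, x => (a : ℝ) * t₁.eval x + (b : ℝ) * t₂.eval x

/-- All multiplicative edge labels are nonnegative rationals. -/
def Valid {n : ℕ} : ChvatalTree n → Prop
  | leaf _ _ => True
  | ceil t => t.Valid
  | scale a t => 0 ≤ a ∧ t.Valid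
  | comb a b t₁ t₂ => 0 ≤ a ∧ 0 ≤ b ∧ t₁.Valid ∧ t₂.Valid

/-- The ceiling count of the tree. -/
def cc {n : ℕ} : ChvatalTree n → ℕ
  | leaf _ _ => 0
  | ceil t => t.cc + 1
  | scale _ t => t.cc
  | comb _ _ t₁ t₂ => t₁.cc + t₂.cc

/-- All leaves are homogeneous linear functions. -/
def Linear {n : ℕ} : ChvatalTree n → Prop
  | leaf _ c => c = 0
  | ceil t => t.Linear
  | scale _ t => t.Linear
  | comb _ _ t₁ t₂ => t₁.Linear ∧ t₂.Linear

end ChvatalTree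

/-- `f` is an affine Chvátal function. -/
def IsAffineChvatal {n : ℕ} (f : (Fin n → ℝ) → ℝ) : Prop :=
  ∃ T : ChvatalTree n, T.Valid ∧ ∀ x, T.eval x = f x

/-- `f` is a Chvátal function (all leaves homogeneous linear). -/
def IsChvatal {n : ℕ} (f : (Fin n → ℝ) → ℝ) : Prop :=
  ∃ T : ChvatalTree n, T.Valid ∧ T.Linear ∧ ∀ x, T.eval x = f x

/-- `S ⊆ ℝ^n` is the projection of a mixed-integer linear set. -/
def MILPRepresentable {n : ℕ} (S : Set (Fin n → ℝ)) : Prop :=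
  ∃ (m p q : ℕ) (A : Matrix (Fin m) (Fin n) ℚ) (B : Matrix (Fin m) (Fin p) ℚ)
    (C : Matrix (Fin m) (Fin q) ℚ) (d : Fin m → ℚ),
    S = {x | ∃ (y : Fin p → ℝ) (z : Fin q → ℤ), ∀ i : Fin m,
      (d i : ℝ) ≤ (∑ j, (A i j : ℝ) * x j) + (∑ j, (B i j : ℝ) * y j)
        + (∑ j, (C i j : ℝ) * (z j : ℝ))}



section folds
variable {α : Type*} [LinearOrder α]

lemma le_foldr_max (l : List α) (i : α) : ∀ a ∈ l, a ≤ l.foldr max i := by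
  induction l with
  | nil => simp
  | cons h t ih =>
    intro a ha
    rcases List.mem_cons.mp ha with rfl | ha
    · exact le_max_left _ _
    · exact le_trans (ih a ha) (le_max_right _ _)

lemma init_le_foldr_max (l : List α) (i : α) : i ≤ l.foldr max i := by
  induction l with
  | nil => simp
  | cons h t ih => exact le_trans ih (le_max_right _ _)

lemma foldr_max_le (l : List α) (i u : α) (h : ∀ a ∈ l, a ≤ u) (hi : i ≤ u) :
    l.foldr max i ≤ u := by
  induction l with
  | nil => simpa
  | cons h' t ih =>
    simp only [List.foldr_cons]
    exact max_le (h h' (List.mem_cons_self)) (ih (fun a ha => h a (List.mem_cons_of_mem _ ha)))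

lemma foldr_min_le (l : List α) (i : α) : ∀ a ∈ l, l.foldr min i ≤ a := by
  induction l with
  | nil => simp
  | cons h t ih =>
    intro a ha
    rcases List.mem_cons.mp ha with rfl | ha
    · exact min_le_left _ _
    · exact le_trans (min_le_right _ _) (ih a ha)

end folds

/-- One-variable Fourier–Motzkin elimination over the reals. -/
lemma fm_real (l : List (ℝ × ℝ)) :
    (∃ y : ℝ, ∀ r ∈ l, r.1 + r.2 * y ≤ 0) ↔
      ((∀ r ∈ l, r.2 = 0 → r.1 ≤ 0) ∧
        ∀ r ∈ l, ∀ s ∈ l, r.2 < 0 → 0 < s.2 → s.2 * (r.1 / (-r.2)) + s.1 ≤ 0) := by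
  constructor
  · rintro ⟨y, hy⟩
    refine ⟨fun r hr h0 => by have := hy r hr; rw [h0] at this; linarith, ?_⟩
    intro r hr s hs hrneg hspos
    have h1 := hy r hr
    have h2 := hy s hs
    have hlow : r.1 / (-r.2) ≤ y := by
      rw [div_le_iff₀ (by linarith : (0:ℝ) < -r.2)]; nlinarith
    nlinarith
  · rintro ⟨hz, hp⟩
    set lows : List ℝ := (l.filter (fun r => r.2 < 0)).map (fun r => r.1 / (-r.2)) with hlows
    set upps : List ℝ := (l.filter (fun r => 0 < r.2)).map (fun r => -r.1 / r.2) with hupps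
    have keylow : ∀ r ∈ l, r.2 < 0 → r.1 / (-r.2) ∈ lows := by
      intro r hr h
      exact List.mem_map_of_mem (List.mem_filter.mpr ⟨hr, by simpa using h⟩)
    have keyupp : ∀ s ∈ l, 0 < s.2 → -s.1 / s.2 ∈ upps := by
      intro s hs h
      exact List.mem_map_of_mem (List.mem_filter.mpr ⟨hs, by simpa using h⟩)
    have lowle : ∀ a ∈ lows, ∀ s ∈ l, 0 < s.2 → a ≤ -s.1 / s.2 := by
      intro a ha s hs hspos
      rcases List.mem_map.mp ha with ⟨r, hrf, rfl⟩
      rcases List.mem_filter.mp hrf with ⟨hr, hrneg'⟩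
      have hrneg : r.2 < 0 := by simpa using hrneg'
      have := hp r hr s hs hrneg hspos
      rw [le_div_iff₀ hspos]; nlinarith
    rcases hle : lows with _ | ⟨l0, ltail⟩
    · -- no lower bounds
      refine ⟨upps.foldr min 0, ?_⟩
      intro r hr
      rcases lt_trichotomy r.2 0 with hneg | h0 | hpos
      · exact absurd (hle ▸ keylow r hr hneg) (List.not_mem_nil)
      · have := hz r hr h0; rw [h0]; linarith
      · have h1 : upps.foldr min 0 ≤ -r.1 / r.2 := foldr_min_le _ _ _ (keyupp r hr hpos)
        rw [le_div_iff₀ hpos] at h1; nlinarith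
    · -- lower bounds exist; take the max
      have hl0 : l0 ∈ lows := by rw [hle]; exact List.mem_cons_self
      set y : ℝ := lows.foldr max l0 with hy
      have hge : ∀ a ∈ lows, a ≤ y := le_foldr_max _ _
      have hyle : ∀ s ∈ l, 0 < s.2 → y ≤ -s.1 / s.2 := by
        intro s hs hspos
        exact foldr_max_le _ _ _ (fun a ha => lowle a ha s hs hspos) (lowle l0 hl0 s hs hspos)
      refine ⟨y, ?_⟩
      intro r hr
      rcases lt_trichotomy r.2 0 with hneg | h0 | hpos
      · have h1 : r.1 / (-r.2) ≤ y := hge _ (keylow r hr hneg)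
        rw [div_le_iff₀ (by linarith : (0:ℝ) < -r.2)] at h1; nlinarith
      · have := hz r hr h0; rw [h0]; linarith
      · have h1 := hyle r hr hpos
        rw [le_div_iff₀ hpos] at h1; nlinarith


/-- One-variable Fourier–Motzkin elimination for an integer variable, with ceilings. -/
lemma fm_int (l : List (ℝ × ℤ)) :
    (∃ w : ℤ, ∀ r ∈ l, r.1 + (r.2 : ℝ) * w ≤ 0) ↔
      ((∀ r ∈ l, r.2 = 0 → r.1 ≤ 0) ∧
        ∀ r ∈ l, ∀ s ∈ l, r.2 < 0 → 0 < s.2 →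
          (s.2 : ℝ) * (⌈r.1 / (-(r.2 : ℝ))⌉ : ℝ) + s.1 ≤ 0) := by
  constructor
  · rintro ⟨w, hw⟩
    refine ⟨fun r hr h0 => by have := hw r hr; rw [h0] at this; push_cast at this; linarith, ?_⟩
    intro r hr s hs hrneg hspos
    have h1 := hw r hr
    have h2 := hw s hs
    have hrneg' : (0:ℝ) < -(r.2:ℝ) := by
      have h0 : (r.2:ℝ) < 0 := by exact_mod_cast hrneg
      linarith
    have hspos' : (0:ℝ) < (s.2:ℝ) := by exact_mod_cast hspos
    have hlow : r.1 / (-(r.2:ℝ)) ≤ (w:ℝ) := by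
      rw [div_le_iff₀ hrneg']; nlinarith
    have hceil : (⌈r.1 / (-(r.2:ℝ))⌉ : ℝ) ≤ (w:ℝ) := by
      exact_mod_cast Int.ceil_le.mpr hlow
    nlinarith
  · rintro ⟨hz, hp⟩
    set lows : List ℤ := (l.filter (fun r => r.2 < 0)).map (fun r => ⌈r.1 / (-(r.2:ℝ))⌉) with hlows
    set upps : List ℝ := (l.filter (fun r => 0 < r.2)).map (fun r => -r.1 / (r.2:ℝ)) with hupps
    have keylow : ∀ r ∈ l, r.2 < 0 → ⌈r.1 / (-(r.2:ℝ))⌉ ∈ lows := by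
      intro r hr h
      exact List.mem_map_of_mem (List.mem_filter.mpr ⟨hr, by simpa using h⟩)
    have keyupp : ∀ s ∈ l, 0 < s.2 → -s.1 / (s.2:ℝ) ∈ upps := by
      intro s hs h
      exact List.mem_map_of_mem (List.mem_filter.mpr ⟨hs, by simpa using h⟩)
    have lowle : ∀ a ∈ lows, ∀ s ∈ l, 0 < s.2 → (a:ℝ) ≤ -s.1 / (s.2:ℝ) := by
      intro a ha s hs hspos
      rcases List.mem_map.mp ha with ⟨r, hrf, rfl⟩
      rcases List.mem_filter.mp hrf with ⟨hr, hrneg'⟩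
      have hrneg : r.2 < 0 := by simpa using hrneg'
      have := hp r hr s hs hrneg hspos
      have hspos' : (0:ℝ) < (s.2:ℝ) := by exact_mod_cast hspos
      rw [le_div_iff₀ hspos']; nlinarith
    rcases hle : lows with _ | ⟨l0, ltail⟩
    · refine ⟨⌊upps.foldr min 0⌋, ?_⟩
      intro r hr
      rcases lt_trichotomy r.2 0 with hneg | h0 | hpos
      · exact absurd (hle ▸ keylow r hr hneg) (List.not_mem_nil)
      · have := hz r hr h0; rw [h0]; push_cast; linarith
      · have h1 : upps.foldr min 0 ≤ -r.1 / (r.2:ℝ) := foldr_min_le _ _ _ (keyupp r hr hpos)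
        have h2 : (⌊upps.foldr min 0⌋ : ℝ) ≤ -r.1 / (r.2:ℝ) := le_trans (Int.floor_le _) h1
        have hrpos' : (0:ℝ) < (r.2:ℝ) := by exact_mod_cast hpos
        rw [le_div_iff₀ hrpos'] at h2; nlinarith
    · have hl0 : l0 ∈ lows := by rw [hle]; exact List.mem_cons_self
      set w : ℤ := lows.foldr max l0 with hw
      have hge : ∀ a ∈ lows, a ≤ w := le_foldr_max _ _
      have hwle : ∀ s ∈ l, 0 < s.2 → (w:ℝ) ≤ -s.1 / (s.2:ℝ) := by
        intro s hs hspos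
        have h1 : ∀ a ∈ lows, (a:ℝ) ≤ -s.1 / (s.2:ℝ) := fun a ha => lowle a ha s hs hspos
        -- w is a fold of integers; show (w:ℝ) ≤ u by showing w ≤ some integer bound? use fold over ℤ with cast
        have : ∀ a ∈ lows, a ≤ ⌊-s.1 / (s.2:ℝ)⌋ := fun a ha => Int.le_floor.mpr (h1 a ha)
        have h2 : w ≤ ⌊-s.1 / (s.2:ℝ)⌋ :=
          foldr_max_le _ _ _ this (this l0 hl0)
        calc (w:ℝ) ≤ (⌊-s.1 / (s.2:ℝ)⌋ : ℝ) := by exact_mod_cast h2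
          _ ≤ _ := Int.floor_le _
      refine ⟨w, ?_⟩
      intro r hr
      rcases lt_trichotomy r.2 0 with hneg | h0 | hpos
      · have h1 : ⌈r.1 / (-(r.2:ℝ))⌉ ≤ w := hge _ (keylow r hr hneg)
        have h2 : r.1 / (-(r.2:ℝ)) ≤ (w:ℝ) := le_trans (Int.le_ceil _) (by exact_mod_cast h1)
        have hrneg' : (0:ℝ) < -(r.2:ℝ) := by
          have : (r.2:ℝ) < 0 := by exact_mod_cast hneg
          linarith
        rw [div_le_iff₀ hrneg'] at h2; nlinarith
      · have := hz r hr h0; rw [h0]; push_cast; linarith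
      · have h1 := hwle r hr hpos
        have hrpos' : (0:ℝ) < (r.2:ℝ) := by exact_mod_cast hpos
        rw [le_div_iff₀ hrpos'] at h1; nlinarith


variable {n p q : ℕ}

abbrev FMRow (n p q : ℕ) := (Fin n → ℚ) × (Fin p → ℚ) × (Fin q → ℚ) × ℚ

def FMRowSat (x : Fin n → ℝ) (y : Fin p → ℝ) (z : Fin q → ℤ) (r : FMRow n p q) : Prop :=
  (∑ j, (r.1 j : ℝ) * x j) + (∑ j, (r.2.1 j : ℝ) * y j) + (∑ j, (r.2.2.1 j : ℝ) * (z j : ℝ))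
    ≤ (r.2.2.2 : ℝ)

def rowRestrict (r : FMRow n (p+1) q) : FMRow n p q :=
  (r.1, fun j => r.2.1 j.castSucc, r.2.2.1, r.2.2.2)

def rowCombine (r s : FMRow n (p+1) q) : FMRow n p q :=
  (fun j => s.2.1 (Fin.last p) / (-(r.2.1 (Fin.last p))) * r.1 j + s.1 j,
   fun j => s.2.1 (Fin.last p) / (-(r.2.1 (Fin.last p))) * r.2.1 j.castSucc + s.2.1 j.castSucc,
   fun j => s.2.1 (Fin.last p) / (-(r.2.1 (Fin.last p))) * r.2.2.1 j + s.2.2.1 j,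
   s.2.1 (Fin.last p) / (-(r.2.1 (Fin.last p))) * r.2.2.2 + s.2.2.2)

def rowElimList (l : List (FMRow n (p+1) q)) : List (FMRow n p q) :=
  (l.filterMap fun r => if r.2.1 (Fin.last p) = 0 then some (rowRestrict r) else none)
    ++ ((l.product l).filterMap fun rs =>
        if rs.1.2.1 (Fin.last p) < 0 ∧ 0 < rs.2.2.1 (Fin.last p)
        then some (rowCombine rs.1 rs.2) else none)

lemma mem_rowElimList (l : List (FMRow n (p+1) q)) (r' : FMRow n p q) :
    r' ∈ rowElimList l ↔
      (∃ r ∈ l, r.2.1 (Fin.last p) = 0 ∧ r' = rowRestrict r) ∨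
      (∃ r ∈ l, ∃ s ∈ l, r.2.1 (Fin.last p) < 0 ∧ 0 < s.2.1 (Fin.last p) ∧
        r' = rowCombine r s) := by
  simp only [rowElimList, List.mem_append, List.mem_filterMap]
  constructor
  · rintro (⟨r, hr, hopt⟩ | ⟨⟨r, s⟩, hrs, hopt⟩)
    · split at hopt
      · exact Or.inl ⟨r, hr, by assumption, by simpa using hopt.symm⟩
      · simp at hopt
    · obtain ⟨hr, hs⟩ := List.mem_product.mp hrs
      split at hopt
      · rename_i h; exact Or.inr ⟨r, hr, s, hs, h.1, h.2, by simpa using hopt.symm⟩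
      · simp at hopt
  · rintro (⟨r, hr, h0, rfl⟩ | ⟨r, hr, s, hs, h1, h2, rfl⟩)
    · exact Or.inl ⟨r, hr, by simp [h0]⟩
    · exact Or.inr ⟨⟨r, s⟩, List.mem_product.mpr ⟨hr, hs⟩, by simp [h1, h2]⟩

lemma rowStep (l : List (FMRow n (p+1) q)) (x : Fin n → ℝ) (y : Fin p → ℝ) (z : Fin q → ℤ) :
    (∃ yl : ℝ, ∀ r ∈ l, FMRowSat x (Fin.snoc y yl) z r) ↔
      ∀ r' ∈ rowElimList l, FMRowSat x y z r' := by
  classical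
  set H : FMRow n (p+1) q → ℝ := fun r =>
    (∑ j, (r.1 j : ℝ) * x j) + (∑ j : Fin p, (r.2.1 j.castSucc : ℝ) * y j)
      + (∑ j, (r.2.2.1 j : ℝ) * (z j : ℝ)) - (r.2.2.2 : ℝ) with hH
  have hsat : ∀ (yl : ℝ) (r : FMRow n (p+1) q),
      FMRowSat x (Fin.snoc y yl) z r ↔ H r + (r.2.1 (Fin.last p) : ℝ) * yl ≤ 0 := by
    intro yl r
    unfold FMRowSat
    rw [Fin.sum_univ_castSucc (f := fun j => (r.2.1 j : ℝ) * (Fin.snoc y yl : Fin (p+1) → ℝ) j)]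
    simp only [Fin.snoc_castSucc, Fin.snoc_last, hH]
    constructor <;> intro h <;> linarith
  have hres : ∀ r, FMRowSat x y z (rowRestrict r) ↔ H r ≤ 0 := by
    intro r
    unfold FMRowSat rowRestrict
    simp only [hH]
    constructor <;> intro h <;> linarith
  have hcomb : ∀ r s : FMRow n (p+1) q,
      (FMRowSat x y z (rowCombine r s) ↔
        (s.2.1 (Fin.last p) : ℝ) * (H r / (-(r.2.1 (Fin.last p) : ℝ))) + H s ≤ 0) := by
    intro r s
    set μ : ℝ := (s.2.1 (Fin.last p) : ℝ) / (-(r.2.1 (Fin.last p) : ℝ)) with hμdef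
    have hμ : ((s.2.1 (Fin.last p) / (-(r.2.1 (Fin.last p))) : ℚ) : ℝ) = μ := by
      push_cast [hμdef]; ring
    have hx : (∑ j, ((s.2.1 (Fin.last p) / (-(r.2.1 (Fin.last p))) * r.1 j + s.1 j : ℚ) : ℝ) * x j)
        = μ * (∑ j, (r.1 j : ℝ) * x j) + ∑ j, (s.1 j : ℝ) * x j := by
      rw [Finset.mul_sum, ← Finset.sum_add_distrib]
      refine Finset.sum_congr rfl fun j _ => ?_
      push_cast [hμdef]; ring
    have hy2 : (∑ j : Fin p, ((s.2.1 (Fin.last p) / (-(r.2.1 (Fin.last p))) * r.2.1 j.castSucc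
          + s.2.1 j.castSucc : ℚ) : ℝ) * y j)
        = μ * (∑ j : Fin p, (r.2.1 j.castSucc : ℝ) * y j)
          + ∑ j : Fin p, (s.2.1 j.castSucc : ℝ) * y j := by
      rw [Finset.mul_sum, ← Finset.sum_add_distrib]
      refine Finset.sum_congr rfl fun j _ => ?_
      push_cast [hμdef]; ring
    have hz2 : (∑ j, ((s.2.1 (Fin.last p) / (-(r.2.1 (Fin.last p))) * r.2.2.1 j
          + s.2.2.1 j : ℚ) : ℝ) * (z j : ℝ))
        = μ * (∑ j, (r.2.2.1 j : ℝ) * (z j : ℝ)) + ∑ j, (s.2.2.1 j : ℝ) * (z j : ℝ) := by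
      rw [Finset.mul_sum, ← Finset.sum_add_distrib]
      refine Finset.sum_congr rfl fun j _ => ?_
      push_cast [hμdef]; ring
    have hmul : (s.2.1 (Fin.last p) : ℝ) * (H r / (-(r.2.1 (Fin.last p) : ℝ))) = μ * H r := by
      rw [hμdef]; ring
    have hdist : μ * H r + H s =
        μ * (∑ j, (r.1 j : ℝ) * x j) + (∑ j, (s.1 j : ℝ) * x j)
          + (μ * (∑ j : Fin p, (r.2.1 j.castSucc : ℝ) * y j)
            + ∑ j : Fin p, (s.2.1 j.castSucc : ℝ) * y j)
          + (μ * (∑ j, (r.2.2.1 j : ℝ) * (z j : ℝ)) + ∑ j, (s.2.2.1 j : ℝ) * (z j : ℝ))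
          - (μ * (r.2.2.2 : ℝ) + (s.2.2.2 : ℝ)) := by
      simp only [hH]; ring
    unfold FMRowSat rowCombine
    rw [hx, hy2, hz2, hmul, hdist]
    push_cast
    rw [← hμdef]
    constructor <;> intro h <;> linarith
  -- translate to the abstract FM lemma
  have step1 : (∃ yl : ℝ, ∀ r ∈ l, FMRowSat x (Fin.snoc y yl) z r) ↔
      (∃ yl : ℝ, ∀ e ∈ l.map (fun r => (H r, (r.2.1 (Fin.last p) : ℝ))), e.1 + e.2 * yl ≤ 0) := by
    apply exists_congr; intro yl
    constructor
    · intro h e he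
      rcases List.mem_map.mp he with ⟨r, hr, rfl⟩
      exact (hsat yl r).mp (h r hr)
    · intro h r hr
      exact (hsat yl r).mpr (h _ (List.mem_map_of_mem hr))
  rw [step1, fm_real]
  constructor
  · rintro ⟨h1, h2⟩ r' hr'
    rcases (mem_rowElimList l r').mp hr' with ⟨r, hr, h0, rfl⟩ | ⟨r, hr, s, hs, hneg, hpos, rfl⟩
    · exact (hres r).mpr (h1 _ (List.mem_map_of_mem hr) (by exact Rat.cast_eq_zero.mpr h0))
    · refine (hcomb r s).mpr (h2 _ (List.mem_map_of_mem hr) _ (List.mem_map_of_mem hs)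
        (by exact (by exact_mod_cast hneg : (r.2.1 (Fin.last p) : ℝ) < 0))
        (by exact (by exact_mod_cast hpos : (0:ℝ) < (s.2.1 (Fin.last p) : ℝ))))
  · intro h
    constructor
    · intro e he h0
      rcases List.mem_map.mp he with ⟨r, hr, rfl⟩
      have h0'' : (r.2.1 (Fin.last p) : ℝ) = 0 := h0
      have h0' : r.2.1 (Fin.last p) = 0 := by exact_mod_cast h0''
      exact (hres r).mp (h _ ((mem_rowElimList l _).mpr (Or.inl ⟨r, hr, h0', rfl⟩)))
    · intro e he e' he' hneg hpos
      rcases List.mem_map.mp he with ⟨r, hr, rfl⟩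
      rcases List.mem_map.mp he' with ⟨s, hs, rfl⟩
      have hneg'' : (r.2.1 (Fin.last p) : ℝ) < 0 := hneg
      have hpos'' : (0:ℝ) < (s.2.1 (Fin.last p) : ℝ) := hpos
      have hneg' : r.2.1 (Fin.last p) < 0 := by exact_mod_cast hneg''
      have hpos' : 0 < s.2.1 (Fin.last p) := by exact_mod_cast hpos''
      exact (hcomb r s).mp
        (h _ ((mem_rowElimList l _).mpr (Or.inr ⟨r, hr, s, hs, hneg', hpos', rfl⟩)))


lemma rowElim {n q : ℕ} : ∀ (p : ℕ) (l : List (FMRow n p q)), ∃ l0 : List (FMRow n 0 q),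
    ∀ (x : Fin n → ℝ) (z : Fin q → ℤ),
      ((∃ y : Fin p → ℝ, ∀ r ∈ l, FMRowSat x y z r) ↔
        ∀ r ∈ l0, FMRowSat x (fun _ => 0) z r) := by
  intro p
  induction p with
  | zero =>
    intro l
    refine ⟨l, fun x z => ?_⟩
    constructor
    · rintro ⟨y, hy⟩ r hr
      have : y = fun _ => 0 := Subsingleton.elim _ _
      exact this ▸ hy r hr
    · intro h
      exact ⟨fun _ => 0, h⟩
  | succ p ih =>
    intro l
    obtain ⟨l0, hl0⟩ := ih (rowElimList l)
    refine ⟨l0, fun x z => ?_⟩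
    rw [← hl0 x z]
    constructor
    · rintro ⟨y, hy⟩
      refine ⟨Fin.init y, (rowStep l x (Fin.init y) z).mp ⟨y (Fin.last p), ?_⟩⟩
      intro r hr
      rw [Fin.snoc_init_self]
      exact hy r hr
    · rintro ⟨y', hy'⟩
      obtain ⟨yl, hyl⟩ := (rowStep l x y' z).mpr hy'
      exact ⟨Fin.snoc y' yl, hyl⟩

section IntStage
open ChvatalTree

abbrev CIneq (n k : ℕ) := ChvatalTree n × (Fin k → ℤ) × ℚ

def CSat {n k : ℕ} (x : Fin n → ℝ) (z : Fin k → ℤ) (I : CIneq n k) : Prop :=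
  I.1.eval x + ∑ j, (I.2.1 j : ℝ) * (z j : ℝ) ≤ (I.2.2 : ℝ)

variable {n k : ℕ}

def gL (I : CIneq n (k+1)) : ℤ := I.2.1 (Fin.last k)

def bigM (l : List (CIneq n (k+1))) : ℤ := (l.map (fun I => max 1 |gL I|)).prod

lemma bigM_pos (l : List (CIneq n (k+1))) : 0 < bigM l := by
  apply List.prod_pos
  intro a ha
  rcases List.mem_map.mp ha with ⟨I, _, rfl⟩
  exact lt_of_lt_of_le one_pos (le_max_left _ _)

lemma gL_dvd_bigM {l : List (CIneq n (k+1))} {I : CIneq n (k+1)} (hI : I ∈ l)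
    (h : gL I ≠ 0) : gL I ∣ bigM l := by
  rw [← abs_dvd]
  have h1 : |gL I| = max 1 |gL I| := by
    have : 1 ≤ |gL I| := Int.one_le_abs (by simpa using h)
    omega
  rw [h1]
  exact List.dvd_prod (List.mem_map_of_mem hI)

def bshift (I : CIneq n (k+1)) (t : Fin k → ℤ) : ℚ :=
  I.2.2 - ∑ j, (I.2.1 j.castSucc : ℚ) * (t j : ℚ)

def zeroIneq (M : ℤ) (I : CIneq n (k+1)) (t : Fin k → ℤ) : CIneq n k :=
  (I.1, fun j => M * I.2.1 j.castSucc, bshift I t)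

def pairIneq (M : ℤ) (I J : CIneq n (k+1)) (t : Fin k → ℤ) : CIneq n k :=
  (ChvatalTree.comb (gL J : ℚ) 1
     (ChvatalTree.ceil (ChvatalTree.scale ((-gL I : ℤ) : ℚ)⁻¹
        (ChvatalTree.comb 1 1 I.1 (ChvatalTree.leaf 0 (-(bshift I t)))))) J.1,
   fun j => gL J * (M / (-gL I) * I.2.1 j.castSucc) + M * J.2.1 j.castSucc,
   bshift J t)

def elimSys (l : List (CIneq n (k+1))) (t : Fin k → ℤ) : List (CIneq n k) :=
  (l.filterMap fun I => if gL I = 0 then some (zeroIneq (bigM l) I t) else none)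
    ++ ((l.product l).filterMap fun IJ =>
        if gL IJ.1 < 0 ∧ 0 < gL IJ.2 then some (pairIneq (bigM l) IJ.1 IJ.2 t) else none)

lemma mem_elimSys (l : List (CIneq n (k+1))) (t : Fin k → ℤ) (I' : CIneq n k) :
    I' ∈ elimSys l t ↔
      (∃ I ∈ l, gL I = 0 ∧ I' = zeroIneq (bigM l) I t) ∨
      (∃ I ∈ l, ∃ J ∈ l, gL I < 0 ∧ 0 < gL J ∧ I' = pairIneq (bigM l) I J t) := by
  simp only [elimSys, List.mem_append, List.mem_filterMap]
  constructor
  · rintro (⟨I, hI, hopt⟩ | ⟨⟨I, J⟩, hIJ, hopt⟩)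
    · split at hopt
      · exact Or.inl ⟨I, hI, by assumption, by simpa using hopt.symm⟩
      · simp at hopt
    · obtain ⟨hI, hJ⟩ := List.mem_product.mp hIJ
      split at hopt
      · rename_i h; exact Or.inr ⟨I, hI, J, hJ, h.1, h.2, by simpa using hopt.symm⟩
      · simp at hopt
  · rintro (⟨I, hI, h0, rfl⟩ | ⟨I, hI, J, hJ, h1, h2, rfl⟩)
    · exact Or.inl ⟨I, hI, by simp [h0]⟩
    · exact Or.inr ⟨⟨I, J⟩, List.mem_product.mpr ⟨hI, hJ⟩, by simp [h1, h2]⟩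

lemma elimSys_valid (l : List (CIneq n (k+1))) (t : Fin k → ℤ)
    (hl : ∀ I ∈ l, I.1.Valid) : ∀ I' ∈ elimSys l t, I'.1.Valid := by
  intro I' hI'
  rcases (mem_elimSys l t I').mp hI' with ⟨I, hI, _, rfl⟩ | ⟨I, hI, J, hJ, h1, h2, rfl⟩
  · exact hl I hI
  · refine ⟨by exact_mod_cast h2.le, zero_le_one, ?_, hl J hJ⟩
    refine ⟨?_, zero_le_one, zero_le_one, hl I hI, trivial⟩
    have : (0:ℚ) < ((-gL I : ℤ) : ℚ) := by exact_mod_cast (by omega : (0:ℤ) < -gL I)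
    positivity

lemma residue_decomp (M : ℤ) (hM : 0 < M) (z : ℤ) :
    ∃ (v : ℤ) (t : Fin M.toNat), z = M * v + ((t : ℕ) : ℤ) := by
  refine ⟨z / M, ⟨(z % M).toNat, ?_⟩, ?_⟩
  · have h1 : z % M < M := Int.emod_lt_of_pos z hM
    have h2 : 0 ≤ z % M := Int.emod_nonneg z (ne_of_gt hM)
    omega
  · have h2 : 0 ≤ z % M := Int.emod_nonneg z (ne_of_gt hM)
    have h3 := Int.mul_ediv_add_emod z M
    simp only [Int.toNat_of_nonneg h2]
    omega

end IntStage

section IntStepSec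
open ChvatalTree
variable {n k : ℕ}

lemma intStep (l : List (CIneq n (k+1))) (x : Fin n → ℝ) :
    (∃ z : Fin (k+1) → ℤ, ∀ I ∈ l, CSat x z I) ↔
      ∃ t : Fin k → Fin (bigM l).toNat, ∃ v : Fin k → ℤ,
        ∀ I' ∈ elimSys l (fun j => ((t j : ℕ) : ℤ)), CSat x v I' := by
  set M := bigM l with hMdef
  have hM : 0 < M := bigM_pos l
  have stepB : ∀ (t : Fin k → ℤ) (v : Fin k → ℤ),
      ((∃ w : ℤ, ∀ I ∈ l, CSat x (Fin.snoc (fun j => M * v j + t j) w) I) ↔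
        ∀ I' ∈ elimSys l t, CSat x v I') := by
    intro t v
    set HH : CIneq n (k+1) → ℝ := fun I =>
      I.1.eval x + (∑ j, ((M * I.2.1 j.castSucc : ℤ) : ℝ) * (v j : ℝ)) - ((bshift I t : ℚ) : ℝ)
      with hHH
    have hbcast : ∀ I : CIneq n (k+1), ((bshift I t : ℚ) : ℝ)
        = (I.2.2 : ℝ) - ∑ j, (I.2.1 j.castSucc : ℝ) * (t j : ℝ) := by
      intro I
      unfold bshift
      push_cast
      ring
    have hsat : ∀ (w : ℤ) (I : CIneq n (k+1)),
        CSat x (Fin.snoc (fun j => M * v j + t j) w) I ↔ HH I + (gL I : ℝ) * (w : ℝ) ≤ 0 := by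
      intro w I
      unfold CSat
      rw [Fin.sum_univ_castSucc (f := fun j => (I.2.1 j : ℝ)
        * (((Fin.snoc (fun j => M * v j + t j) w : Fin (k+1) → ℤ)) j : ℝ))]
      simp only [Fin.snoc_castSucc, Fin.snoc_last]
      have exp : ∑ j : Fin k, (I.2.1 j.castSucc : ℝ) * ((M * v j + t j : ℤ) : ℝ)
          = (∑ j, ((M * I.2.1 j.castSucc : ℤ) : ℝ) * (v j : ℝ))
            + ∑ j, (I.2.1 j.castSucc : ℝ) * (t j : ℝ) := by
        rw [← Finset.sum_add_distrib]
        refine Finset.sum_congr rfl fun j _ => ?_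
        push_cast
        ring
      rw [exp]
      simp only [hHH, hbcast, gL]
      constructor <;> intro h <;> linarith
    have hzero : ∀ I : CIneq n (k+1), CSat x v (zeroIneq M I t) ↔ HH I ≤ 0 := by
      intro I
      unfold CSat zeroIneq
      simp only [hHH]
      constructor <;> intro h <;> linarith
    have hpair : ∀ I J : CIneq n (k+1), I ∈ l → J ∈ l → gL I < 0 → 0 < gL J →
        (CSat x v (pairIneq M I J t) ↔
          (gL J : ℝ) * ((⌈HH I / (-(gL I : ℝ))⌉ : ℤ) : ℝ) + HH J ≤ 0) := by
      intro I J hI hJ hgI hgJ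
      have hdvd : (-(gL I)) ∣ M := (neg_dvd).mpr (gL_dvd_bigM hI (by omega))
      set c : ℤ := M / (-(gL I)) with hcdef
      have hc : (-(gL I)) * c = M := Int.mul_ediv_cancel' hdvd
      have hgne : (0:ℝ) < -((gL I : ℤ) : ℝ) := by
        have : ((gL I : ℤ) : ℝ) < 0 := by exact_mod_cast hgI
        linarith
      set m : ℤ := ∑ j, c * I.2.1 j.castSucc * v j with hmdef
      set A : ℝ := (((-(gL I) : ℤ) : ℚ)⁻¹ : ℝ)
        * ((1:ℚ) * I.1.eval x + (1:ℚ) * ((∑ j, ((0 : Fin n → ℚ) j : ℝ) * x j) + ((-(bshift I t) : ℚ)) )) with hAdef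
      -- A equals the eval of the inner (scale) tree; also a clean formula for it:
      have hne : ((gL I : ℤ) : ℝ) ≠ 0 := by
        have : ((gL I : ℤ) : ℝ) < 0 := by exact_mod_cast hgI
        linarith
      have hA : A = (I.1.eval x - ((bshift I t : ℚ) : ℝ)) / (-((gL I : ℤ) : ℝ)) := by
        rw [hAdef]
        push_cast
        ring_nf
        field_simp
        simp
      have hsummid : (∑ j, ((M * I.2.1 j.castSucc : ℤ) : ℝ) * (v j : ℝ))
          = (-((gL I : ℤ) : ℝ)) * (m : ℝ) := by
        have : ∀ j : Fin k, ((M * I.2.1 j.castSucc : ℤ) : ℝ) * (v j : ℝ)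
            = (-((gL I : ℤ) : ℝ)) * (((c * I.2.1 j.castSucc * v j : ℤ) : ℝ)) := by
          intro j
          rw [← hc]
          push_cast
          ring
        rw [Finset.sum_congr rfl fun j _ => this j, ← Finset.mul_sum, hmdef]
        push_cast
        ring
      have hdiv : HH I / (-((gL I : ℤ) : ℝ)) = A + (m : ℝ) := by
        simp only [hHH]
        rw [hsummid, hA]
        field_simp
        ring
      have e1 : ⌈HH I / (-((gL I : ℤ) : ℝ))⌉ = ⌈A⌉ + m := by
        rw [hdiv, Int.ceil_add_intCast]
      have e2 : (∑ j, ((gL J * (c * I.2.1 j.castSucc) + M * J.2.1 j.castSucc : ℤ) : ℝ) * (v j : ℝ))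
          = ((gL J : ℤ) : ℝ) * (m : ℝ) + ∑ j, ((M * J.2.1 j.castSucc : ℤ) : ℝ) * (v j : ℝ) := by
        have : ∀ j : Fin k, ((gL J * (c * I.2.1 j.castSucc) + M * J.2.1 j.castSucc : ℤ) : ℝ) * (v j : ℝ)
            = ((gL J : ℤ) : ℝ) * (((c * I.2.1 j.castSucc * v j : ℤ) : ℝ))
              + ((M * J.2.1 j.castSucc : ℤ) : ℝ) * (v j : ℝ) := by
          intro j
          push_cast
          ring
        rw [Finset.sum_congr rfl fun j _ => this j, Finset.sum_add_distrib, ← Finset.mul_sum, hmdef]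
        push_cast
        ring_nf
      unfold CSat pairIneq
      simp only [ChvatalTree.eval]
      rw [e1, ← hcdef, e2]
      have treeA : ((((-gL I : ℤ) : ℚ)⁻¹ : ℚ) : ℝ) * (((1:ℚ) : ℝ) * I.1.eval x
          + ((1:ℚ) : ℝ) * ((∑ j, (((0 : Fin n → ℚ)) j : ℝ) * x j) + ((-(bshift I t) : ℚ) : ℝ))) = A := by
        rw [hAdef, Rat.cast_inv]
      rw [treeA]
      simp only [hHH]
      push_cast
      constructor <;> intro h <;> linarith
    -- the fm_int chain
    have chain : (∃ w : ℤ, ∀ I ∈ l, CSat x (Fin.snoc (fun j => M * v j + t j) w) I) ↔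
        (∃ w : ℤ, ∀ e ∈ l.map (fun I => (HH I, gL I)), e.1 + (e.2 : ℝ) * (w : ℝ) ≤ 0) := by
      apply exists_congr; intro w
      constructor
      · intro h e he
        rcases List.mem_map.mp he with ⟨I, hI, rfl⟩
        exact (hsat w I).mp (h I hI)
      · intro h I hI
        exact (hsat w I).mpr (h _ (List.mem_map_of_mem hI))
    rw [chain, fm_int]
    constructor
    · rintro ⟨h1, h2⟩ I' hI'
      rcases (mem_elimSys l t I').mp hI' with ⟨I, hI, h0, rfl⟩ | ⟨I, hI, J, hJ, hneg, hpos, rfl⟩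
      · exact (hzero I).mpr (h1 _ (List.mem_map_of_mem hI) h0)
      · exact (hpair I J hI hJ hneg hpos).mpr
          (h2 _ (List.mem_map_of_mem hI) _ (List.mem_map_of_mem hJ) hneg hpos)
    · intro h
      constructor
      · intro e he h0
        rcases List.mem_map.mp he with ⟨I, hI, rfl⟩
        exact (hzero I).mp (h _ ((mem_elimSys l t _).mpr (Or.inl ⟨I, hI, h0, rfl⟩)))
      · intro e he e' he' hneg hpos
        rcases List.mem_map.mp he with ⟨I, hI, rfl⟩
        rcases List.mem_map.mp he' with ⟨J, hJ, rfl⟩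
        exact (hpair I J hI hJ hneg hpos).mp
          (h _ ((mem_elimSys l t _).mpr (Or.inr ⟨I, hI, J, hJ, hneg, hpos, rfl⟩)))
  constructor
  · rintro ⟨z, hz⟩
    choose v tt ht using fun j : Fin k => residue_decomp M hM (z j.castSucc)
    refine ⟨tt, v, (stepB _ v).mp ⟨z (Fin.last k), ?_⟩⟩
    intro I hI
    have hzz : Fin.snoc (fun j => M * v j + ((tt j : ℕ) : ℤ)) (z (Fin.last k)) = z := by
      funext i
      refine Fin.lastCases ?_ (fun i => ?_) i
      · simp
      · simp only [Fin.snoc_castSucc]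
        exact (ht i).symm
    rw [hzz]
    exact hz I hI
  · rintro ⟨tt, v, h⟩
    obtain ⟨w, hw⟩ := (stepB _ v).mpr h
    exact ⟨_, hw⟩

end IntStepSec

section IntElimSec
variable {n : ℕ}

lemma intElim : ∀ (k : ℕ) (ls : List (List (CIneq n k)))
    (_ : ∀ L ∈ ls, ∀ I ∈ L, I.1.Valid),
    ∃ ls0 : List (List (CIneq n 0)), (∀ L ∈ ls0, ∀ I ∈ L, I.1.Valid) ∧
      ∀ x : Fin n → ℝ,
        ((∃ L ∈ ls, ∃ z : Fin k → ℤ, ∀ I ∈ L, CSat x z I) ↔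
          (∃ L ∈ ls0, ∀ I ∈ L, CSat x (fun _ => (0:ℤ)) I)) := by
  intro k
  induction k with
  | zero =>
    intro ls hv
    refine ⟨ls, hv, fun x => ?_⟩
    constructor
    · rintro ⟨L, hL, z, hz⟩
      refine ⟨L, hL, ?_⟩
      have : z = fun _ => (0:ℤ) := Subsingleton.elim _ _
      exact this ▸ hz
    · rintro ⟨L, hL, hz⟩
      exact ⟨L, hL, fun _ => 0, hz⟩
  | succ k ih =>
    intro ls hv
    classical
    set ls' : List (List (CIneq n k)) :=
      ls.flatMap (fun L =>
        ((Finset.univ : Finset (Fin k → Fin (bigM L).toNat)).toList).map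
          (fun tt => elimSys L (fun j => ((tt j : ℕ) : ℤ)))) with hls'
    have hv' : ∀ L' ∈ ls', ∀ I ∈ L', I.1.Valid := by
      intro L' hL'
      rw [hls', List.mem_flatMap] at hL'
      obtain ⟨L, hL, hL'2⟩ := hL'
      rcases List.mem_map.mp hL'2 with ⟨tt, _, rfl⟩
      exact elimSys_valid L _ (hv L hL)
    obtain ⟨ls0, h0v, h0⟩ := ih ls' hv'
    refine ⟨ls0, h0v, fun x => ?_⟩
    rw [← h0 x]
    constructor
    · rintro ⟨L, hL, z, hz⟩
      obtain ⟨tt, v, hvv⟩ := (intStep L x).mp ⟨z, hz⟩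
      refine ⟨elimSys L (fun j => ((tt j : ℕ) : ℤ)), ?_, v, hvv⟩
      rw [hls', List.mem_flatMap]
      exact ⟨L, hL, List.mem_map_of_mem (Finset.mem_toList.mpr (Finset.mem_univ _))⟩
    · rintro ⟨L', hL', v, hvv⟩
      rw [hls', List.mem_flatMap] at hL'
      obtain ⟨L, hL, hL'2⟩ := hL'
      rcases List.mem_map.mp hL'2 with ⟨tt, _, rfl⟩
      obtain ⟨z, hz⟩ := (intStep L x).mpr ⟨tt, v, hvv⟩
      exact ⟨L, hL, z, hz⟩

end IntElimSec

section Bridges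
variable {n q : ℕ}

/-- Clear denominators of the integer-variable coefficients of a 0-real-variable row. -/
def rowToC (r : FMRow n 0 q) : CIneq n q :=
  let Δ : ℕ := ∏ j, (r.2.2.1 j).den
  (ChvatalTree.leaf (fun j => (Δ : ℚ) * r.1 j) 0,
   fun j => ((Δ / (r.2.2.1 j).den : ℕ) : ℤ) * (r.2.2.1 j).num,
   (Δ : ℚ) * r.2.2.2)

lemma rowToC_valid (r : FMRow n 0 q) : (rowToC r).1.Valid := trivial

lemma rowToC_sat (r : FMRow n 0 q) (x : Fin n → ℝ) (z : Fin q → ℤ) :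
    (CSat x z (rowToC r) ↔ FMRowSat x (fun _ => 0) z r) := by
  set Δ : ℕ := ∏ j, (r.2.2.1 j).den with hΔdef
  have hΔpos : 0 < Δ := Finset.prod_pos (fun j _ => (r.2.2.1 j).den_pos)
  have hcoef : ∀ j : Fin q, ((((Δ / (r.2.2.1 j).den : ℕ) : ℤ) * (r.2.2.1 j).num : ℤ) : ℝ)
      = (Δ : ℝ) * ((r.2.2.1 j : ℚ) : ℝ) := by
    intro j
    have hdvd : (r.2.2.1 j).den ∣ Δ := Finset.dvd_prod_of_mem _ (Finset.mem_univ j)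
    have hden : (((r.2.2.1 j).den : ℕ) : ℝ) ≠ 0 := by
      have := (r.2.2.1 j).den_pos
      positivity
    have hq : ((r.2.2.1 j : ℚ) : ℝ) = ((r.2.2.1 j).num : ℝ) / (((r.2.2.1 j).den : ℕ) : ℝ) := by
      rw [Rat.cast_def]
    have hcancel : ((Δ / (r.2.2.1 j).den : ℕ) : ℝ) * (((r.2.2.1 j).den : ℕ) : ℝ) = (Δ : ℝ) := by
      rw [← Nat.cast_mul, Nat.div_mul_cancel hdvd]
    rw [hq]
    push_cast at hcancel ⊢
    field_simp
    rw [show ((((Δ:ℤ) / ((r.2.2.1 j).den:ℤ)) : ℤ) : ℝ) = ((Δ / (r.2.2.1 j).den : ℕ) : ℝ) by norm_cast, ← hcancel]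
    ring
  unfold CSat FMRowSat rowToC
  simp only [ChvatalTree.eval]
  have h1 : (∑ j, (((Δ:ℚ) * r.1 j : ℚ) : ℝ) * x j) = (Δ:ℝ) * ∑ j, (r.1 j : ℝ) * x j := by
    rw [Finset.mul_sum]
    refine Finset.sum_congr rfl fun j _ => ?_
    push_cast
    ring
  have h2 : (∑ j, ((((Δ / (r.2.2.1 j).den : ℕ) : ℤ) * (r.2.2.1 j).num : ℤ) : ℝ) * (z j : ℝ))
      = (Δ:ℝ) * ∑ j, ((r.2.2.1 j : ℚ) : ℝ) * (z j : ℝ) := by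
    rw [Finset.mul_sum]
    refine Finset.sum_congr rfl fun j _ => ?_
    rw [hcoef j]
    ring
  have h3 : (((Δ:ℚ) * r.2.2.2 : ℚ) : ℝ) = (Δ:ℝ) * (r.2.2.2:ℝ) := by
    rw [Rat.cast_mul, Rat.cast_natCast]
  rw [h1, h2, h3]
  have hy0 : (∑ j : Fin 0, ((r.2.1 j : ℚ) : ℝ) * (0:ℝ)) = 0 := by simp
  have hΔR : (0:ℝ) < (Δ:ℝ) := by exact_mod_cast hΔpos
  simp only [Rat.cast_zero, add_zero]
  constructor
  · intro h
    rw [show (∑ j : Fin 0, ((r.2.1 j : ℚ) : ℝ) * (fun _ => (0:ℝ)) j) = 0 by simp]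
    nlinarith [h]
  · intro h
    rw [show (∑ j : Fin 0, ((r.2.1 j : ℚ) : ℝ) * (fun _ => (0:ℝ)) j) = 0 by simp] at h
    nlinarith [h]

/-- The rows encoding the original MILP constraints. -/
def milpRows {m p : ℕ} (A : Matrix (Fin m) (Fin n) ℚ) (B : Matrix (Fin m) (Fin p) ℚ)
    (C : Matrix (Fin m) (Fin q) ℚ) (d : Fin m → ℚ) : List (FMRow n p q) :=
  (List.finRange m).map fun i => (fun j => -A i j, fun j => -B i j, fun j => -C i j, -d i)

lemma milpRows_sat {m p : ℕ} (A : Matrix (Fin m) (Fin n) ℚ) (B : Matrix (Fin m) (Fin p) ℚ)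
    (C : Matrix (Fin m) (Fin q) ℚ) (d : Fin m → ℚ) (x : Fin n → ℝ) (y : Fin p → ℝ)
    (z : Fin q → ℤ) :
    ((∀ i : Fin m, (d i : ℝ) ≤ (∑ j, (A i j : ℝ) * x j) + (∑ j, (B i j : ℝ) * y j)
        + (∑ j, (C i j : ℝ) * (z j : ℝ))) ↔
      ∀ r ∈ milpRows A B C d, FMRowSat x y z r) := by
  have key : ∀ i : Fin m,
      (FMRowSat x y z (fun j => -A i j, fun j => -B i j, fun j => -C i j, -d i) ↔
        (d i : ℝ) ≤ (∑ j, (A i j : ℝ) * x j) + (∑ j, (B i j : ℝ) * y j)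
          + (∑ j, (C i j : ℝ) * (z j : ℝ))) := by
    intro i
    unfold FMRowSat
    push_cast
    simp only [neg_mul]
    rw [Finset.sum_neg_distrib, Finset.sum_neg_distrib, Finset.sum_neg_distrib]
    constructor <;> intro h <;> linarith
  constructor
  · intro h r hr
    rcases List.mem_map.mp hr with ⟨i, _, rfl⟩
    exact (key i).mpr (h i)
  · intro h i
    exact (key i).mp (h _ (List.mem_map_of_mem (List.mem_finRange i)))

end Bridges

def defCIneq (n : ℕ) : CIneq n 0 := (ChvatalTree.leaf 0 0, fun _ => 0, 0)

lemma csat_fin0 {n : ℕ} (x : Fin n → ℝ) (z : Fin 0 → ℤ) (I : CIneq n 0) :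
    CSat x z I ↔ I.1.eval x ≤ (I.2.2 : ℝ) := by
  unfold CSat
  simp

lemma defCIneq_sat {n : ℕ} (x : Fin n → ℝ) :
    (defCIneq n).1.eval x ≤ ((defCIneq n).2.2 : ℝ) := by
  unfold defCIneq
  simp [ChvatalTree.eval]

/-- Every MILP-representable set is a DMIC set: a finite union of sets,
each described by finitely many affine Chvátal inequalities in `x ∈ ℝ^n`. -/
theorem milp_representable_is_dmic {n : ℕ} (S : Set (Fin n → ℝ))
    (hS : MILPRepresentable S) :
    ∃ (t m : ℕ) (f : Fin t → Fin m → ChvatalTree n) (b : Fin t → Fin m → ℝ),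
      (∀ j i, (f j i).Valid) ∧
      S = ⋃ j : Fin t, {x | ∀ i : Fin m, (f j i).eval x ≤ b j i} := by
  classical
  obtain ⟨m, p, q, A, B, C, d, hSdef⟩ := hS
  obtain ⟨l0, hl0⟩ := rowElim (n := n) (q := q) p (milpRows A B C d)
  set lc : List (CIneq n q) := l0.map rowToC with hlc
  obtain ⟨ls0, hv0, hsem⟩ := intElim q [lc]
    (by
      intro L hL I hI
      rcases List.mem_singleton.mp hL with rfl
      rcases List.mem_map.mp hI with ⟨r, _, rfl⟩
      exact rowToC_valid r)
  have hSx : ∀ x : Fin n → ℝ, x ∈ S ↔ ∃ L ∈ ls0, ∀ I ∈ L, CSat x (fun _ => 0) I := by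
    intro x
    rw [hSdef]
    simp only [Set.mem_setOf_eq]
    rw [← hsem x]
    constructor
    · rintro ⟨y, z, hy⟩
      refine ⟨lc, List.mem_singleton_self _, z, ?_⟩
      intro I hI
      rcases List.mem_map.mp hI with ⟨r, hr, rfl⟩
      refine (rowToC_sat r x z).mpr ?_
      exact (hl0 x z).mp ⟨y, (milpRows_sat A B C d x y z).mp hy⟩ r hr
    · rintro ⟨L, hL, z, hz⟩
      rcases List.mem_singleton.mp hL with rfl
      have : ∀ r ∈ l0, FMRowSat x (fun _ => 0) z r := by
        intro r hr
        exact (rowToC_sat r x z).mp (hz _ (List.mem_map_of_mem hr))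
      obtain ⟨y, hy⟩ := (hl0 x z).mpr this
      exact ⟨y, z, (milpRows_sat A B C d x y z).mpr hy⟩
  set T := ls0.length with hT
  set mm := (ls0.map List.length).foldr max 0 with hmm
  have hlen : ∀ L ∈ ls0, L.length ≤ mm :=
    fun L hL => le_foldr_max _ _ _ (List.mem_map_of_mem hL)
  refine ⟨T, mm,
    fun j i => ((ls0.get j).getD i (defCIneq n)).1,
    fun j i => (((ls0.get j).getD i (defCIneq n)).2.2 : ℝ), ?_, ?_⟩
  · intro j i
    show (((ls0.get j).getD (i : ℕ) (defCIneq n)).1).Valid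
    rcases lt_or_ge (i : ℕ) ((ls0.get j).length) with h | h
    · rw [List.getD_eq_getElem _ _ h]
      exact hv0 _ (ls0.get_mem j) _ (List.getElem_mem h)
    · rw [List.getD_eq_default _ _ h]
      exact trivial
  · ext x
    rw [hSx x]
    simp only [Set.mem_iUnion, Set.mem_setOf_eq]
    constructor
    · rintro ⟨L, hL, hsat⟩
      obtain ⟨j, rfl⟩ := List.mem_iff_get.mp hL
      refine ⟨j, fun i => ?_⟩
      show (((ls0.get j).getD (i : ℕ) (defCIneq n)).1).eval x
        ≤ ((((ls0.get j).getD (i : ℕ) (defCIneq n)).2.2 : ℚ) : ℝ)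
      rcases lt_or_ge (i : ℕ) ((ls0.get j).length) with h | h
      · rw [List.getD_eq_getElem _ _ h]
        exact (csat_fin0 x (fun _ => 0) _).mp (hsat _ (List.getElem_mem h))
      · rw [List.getD_eq_default _ _ h]
        exact defCIneq_sat x
    · rintro ⟨j, hj⟩
      refine ⟨ls0.get j, ls0.get_mem j, ?_⟩
      intro I hI
      obtain ⟨i, rfl⟩ := List.mem_iff_get.mp hI
      have hi : (i : ℕ) < mm := lt_of_lt_of_le i.isLt (hlen _ (ls0.get_mem j))
      have this : (((ls0.get j).getD ((i : ℕ)) (defCIneq n)).1).eval x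
          ≤ ((((ls0.get j).getD ((i : ℕ)) (defCIneq n)).2.2 : ℚ) : ℝ) := hj ⟨i, hi⟩
      rw [List.getD_eq_getElem _ _ (by simpa using i.isLt)] at this
      exact (csat_fin0 x (fun _ => 0) _).mpr (by simpa [List.get_eq_getElem] using this)
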